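/- Let K and K̃ be symmetric positive semidefinite n×n matrices with K̃ of rank m, and λ > 0. If (1 - Δ₁)(K + λI) ⪯ K̃ + λI in the semidefinite order, then Δ₁ ≥ λ_{m+1}(K) / (λ_{m+1}(K) + λ), where λ_{m+1}(K) denotes the (m+1)-st largest eigenvalue of K. -/

import Mathlib

open Matrix
set_option maxHeartbeats 1000000

theorem stmt4 {n : ℕ} (m : ℕ) (hmn : m < n)
    (K Kt : Matrix (Fin n) (Fin n) ℝ)
    (hK : K.PosSemidef) (hKt : Kt.PosSemidef)
    (hrank : Kt.rank = m)
    (l Δ₁ : ℝ) (hl : 0 < l) (hΔ : Δ₁ ∈ Set.Icc (0 : ℝ) 1)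
    (μ : Fin n → ℝ) (hμanti : Antitone μ)
    (hμ : ∃ σ : Equiv.Perm (Fin n), μ = hK.1.eigenvalues ∘ σ)
    (h : ((Kt + l • 1) - (1 - Δ₁) • (K + l • 1)).PosSemidef) :
    μ ⟨m, hmn⟩ / (μ ⟨m, hmn⟩ + l) ≤ Δ₁ := by
  obtain ⟨σ, hσ⟩ := hμ
  obtain ⟨hΔ0, hΔ1⟩ := hΔ
  have hμm0 : 0 ≤ μ ⟨m, hmn⟩ := by rw [hσ]; exact hK.eigenvalues_nonneg _
  have hml : 0 < μ ⟨m, hmn⟩ + l := by linarith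
  -- eigenvector family for large eigenvalues
  set e := hK.1.eigenvectorBasis with he
  set v : {i : Fin n // i ≤ ⟨m, hmn⟩} → EuclideanSpace ℝ (Fin n) := fun i => e (σ i.1) with hvdef
  have hv : Orthonormal ℝ v := e.orthonormal.comp _ (σ.injective.comp Subtype.val_injective)
  have hcard : Fintype.card {i : Fin n // i ≤ (⟨m, hmn⟩ : Fin n)} = m + 1 := by
    rw [Fintype.card_congr (Equiv.subtypeEquivRight fun i : Fin n =>
      (Iff.symm (Set.mem_Iic : i ∈ Set.Iic (⟨m, hmn⟩ : Fin n) ↔ _)))]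
    rw [Fintype.card_Iic, Fin.card_Iic]
  set V := Submodule.span ℝ (Set.range v) with hV
  have hVrank : Module.finrank ℝ V = m + 1 := by
    rw [hV, finrank_span_eq_card hv.linearIndependent, hcard]
  set W := LinearMap.ker (Matrix.toEuclideanLin Kt) with hW
  have hWrank : Module.finrank ℝ W = n - m := by
    have h1 := LinearMap.finrank_range_add_finrank_ker (Matrix.toEuclideanLin Kt)
    rw [finrank_euclideanSpace, Fintype.card_fin] at h1
    have h2 : Module.finrank ℝ (LinearMap.range (Matrix.toEuclideanLin Kt)) = m := by
      rw [← hrank, Matrix.rank_eq_finrank_range_toLin Kt (PiLp.basisFun 2 ℝ (Fin n))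
        (PiLp.basisFun 2 ℝ (Fin n)), toEuclideanLin_eq_toLin]
    rw [hW]
    omega
  have hne : V ⊓ W ≠ ⊥ := by
    intro hbot
    have h3 := Submodule.finrank_sup_add_finrank_inf_eq V W
    rw [hbot, finrank_bot, hVrank, hWrank] at h3
    have h4 : Module.finrank ℝ ↥(V ⊔ W) ≤ n := by
      simpa [finrank_euclideanSpace] using Submodule.finrank_le (V ⊔ W)
    omega
  obtain ⟨x, hx, hx0⟩ := Submodule.exists_mem_ne_zero_of_ne_bot hne
  obtain ⟨hxV, hxW⟩ := Submodule.mem_inf.mp hx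
  -- pass to plain functions
  set y : Fin n → ℝ := ⇑x with hy
  set w : {i : Fin n // i ≤ (⟨m, hmn⟩ : Fin n)} → (Fin n → ℝ) := fun i => v i with hwdef
  have hKty : Kt *ᵥ y = 0 := congrArg WithLp.ofLp (LinearMap.mem_ker.mp hxW)
  obtain ⟨c, hc⟩ := (Submodule.mem_span_range_iff_exists_fun ℝ).mp hxV
  have hc' : ∑ i, c i • w i = y := by simpa [hwdef] using congrArg WithLp.ofLp hc
  have hy0 : y ≠ 0 := by intro h0; apply hx0; ext i; simpa using congrFun h0 i
  -- inner products as dot products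
  have inner_eq : ∀ (u z : EuclideanSpace ℝ (Fin n)),
      (inner ℝ u z : ℝ) = (u : Fin n → ℝ) ⬝ᵥ (z : Fin n → ℝ) := by
    intro u z; simp [PiLp.inner_apply, dotProduct, mul_comm]
  have key : ∀ (a b : {i : Fin n // i ≤ (⟨m, hmn⟩ : Fin n)} → ℝ),
      (∑ i, a i • w i) ⬝ᵥ (∑ i, b i • w i) = ∑ i, a i * b i := by
    intro a b
    have h0 := hv.inner_sum a b Finset.univ
    rw [inner_eq] at h0
    simpa using h0
  -- action of K on y
  have hKw : ∀ i, K *ᵥ w i = hK.1.eigenvalues (σ i.1) • w i := fun i =>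
    hK.1.mulVec_eigenvectorBasis (σ i.1)
  have hKy : K *ᵥ y = ∑ i, (hK.1.eigenvalues (σ i.1) * c i) • w i := by
    rw [← hc', show K *ᵥ (∑ i, c i • w i) = K.mulVecLin (∑ i, c i • w i) from rfl, map_sum]
    refine Finset.sum_congr rfl fun i _ => ?_
    rw [LinearMap.map_smul, Matrix.mulVecLin_apply, hKw, smul_smul, mul_comm]
  have hyy : y ⬝ᵥ y = ∑ i, c i * c i := by
    conv_lhs => rw [← hc']
    exact key c c
  have hyy0 : 0 < y ⬝ᵥ y := by
    have hnn : 0 ≤ y ⬝ᵥ y := Finset.sum_nonneg fun i _ => mul_self_nonneg (y i)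
    exact lt_of_le_of_ne hnn fun h' => hy0 (dotProduct_self_eq_zero.mp h'.symm)
  have hyKy : μ ⟨m, hmn⟩ * (y ⬝ᵥ y) ≤ y ⬝ᵥ (K *ᵥ y) := by
    have e2 : y ⬝ᵥ (K *ᵥ y) = ∑ i, c i * (hK.1.eigenvalues (σ i.1) * c i) := by
      rw [hKy]
      conv_lhs => rw [← hc']
      exact key c _
    rw [e2, hyy, Finset.mul_sum]
    refine Finset.sum_le_sum fun i _ => ?_
    have h5 : μ ⟨m, hmn⟩ ≤ hK.1.eigenvalues (σ i.1) := by
      simpa [hσ] using hμanti i.2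
    nlinarith [sq_nonneg (c i)]
  -- the PSD hypothesis applied to y
  have hq := h.dotProduct_mulVec_nonneg y
  simp only [Matrix.sub_mulVec, Matrix.add_mulVec, Matrix.smul_mulVec,
    Matrix.one_mulVec, star_trivial, dotProduct_sub, dotProduct_add,
    dotProduct_smul, hKty, dotProduct_zero, smul_eq_mul] at hq
  -- hq : 0 ≤ 0 + l * (y ⬝ᵥ y) - (1 - Δ₁) * (y ⬝ᵥ (K *ᵥ y) + l * (y ⬝ᵥ y))
  have h6 : (1 - Δ₁) * ((μ ⟨m, hmn⟩ + l) * (y ⬝ᵥ y)) ≤ l * (y ⬝ᵥ y) := by nlinarith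
  have h7 : (1 - Δ₁) * (μ ⟨m, hmn⟩ + l) ≤ l :=
    le_of_mul_le_mul_right (by nlinarith) hyy0
  rw [div_le_iff₀ hml]
  nlinarith
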